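/- (Double robustness of the uncentered influence function for Δ0.) Let π0(x,z) := z·e(x) + (1−z)·(1−e(x)), where e∘X is a version of E[Z | σ(X)] with ε ≤ e ≤ 1−ε, and let ℓ_0, ℓ_1 be versions of E[A | X, Z=0] and E[A | X, Z=1], and set Δ0 := E[ℓ1(X) − ℓ0(X)]. Then (i) for every bounded measurable λ* : S × {0,1} → ℝ, E[ (2Z−1)/π0(X,Z) · (A − λ*(X,Z)) + λ*(X,1) − λ*(X,0) ] = Δ0; and (ii) for every measurable π* : S × {0,1} → ℝ with π*(x,z) ≥ ε′ > 0, E[ (2Z−1)/π*(X,Z) · (A − ℓ_Z(X)) + ℓ_1(X) − ℓ_0(X) ] = Δ0. -/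

import Mathlib

open MeasureTheory

lemma integ_of_bdd {Ω : Type*} [MeasurableSpace Ω] (P : Measure Ω) [IsProbabilityMeasure P]
    {f : Ω → ℝ} (hf : Measurable f) {C : ℝ} (hC : ∀ ω, |f ω| ≤ C) : Integrable f P :=
  (integrable_const C).mono' hf.aestronglyMeasurable
    (Filter.Eventually.of_forall (fun ω => by simpa using hC ω))

lemma abs_mul_le' {a b ca cb : ℝ} (ha : |a| ≤ ca) (hb : |b| ≤ cb) : |a * b| ≤ ca * cb := by
  rw [abs_mul]; exact mul_le_mul ha hb (abs_nonneg _) ((abs_nonneg a).trans ha)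

lemma inv_bnd {a ε : ℝ} (hε : 0 < ε) (h : ε ≤ a) : |a⁻¹| ≤ ε⁻¹ := by
  have ha : 0 < a := lt_of_lt_of_le hε h
  rw [abs_of_pos (inv_pos.mpr ha)]
  exact inv_anti₀ hε h

lemma ae_bdd {Ω S : Type*} [MeasurableSpace Ω] [MeasurableSpace S]
    (P : Measure Ω) [IsProbabilityMeasure P]
    (X : Ω → S) (hX : Measurable X)
    (W : Ω → ℝ) (hW : Measurable W) (hW01 : ∀ ω, W ω = 0 ∨ W ω = 1)
    (A : Ω → ℝ) (hA : Measurable A) (hA01 : ∀ ω, A ω = 0 ∨ A ω = 1)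
    (w : S → ℝ) (hw : Measurable w) (ε : ℝ) (hε : 0 < ε)
    (hwlo : ∀ x, ε ≤ w x) (hwhi : ∀ x, |w x| ≤ 1)
    (hVw : ∀ g : S → ℝ, Measurable g → (∃ C, ∀ x, |g x| ≤ C) →
      ∫ ω, W ω * g (X ω) ∂P = ∫ ω, w (X ω) * g (X ω) ∂P)
    (l : S → ℝ) (hl : Measurable l)
    (hlv : ∀ g : S → ℝ, Measurable g → (∃ C, ∀ x, |g x| ≤ C) →
      ∫ ω, A ω * W ω * g (X ω) ∂P = ∫ ω, l (X ω) * W ω * g (X ω) ∂P) :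
    ∀ᵐ ω ∂P, |l (X ω)| ≤ 2 := by
  classical
  have hWb : ∀ ω, 0 ≤ W ω ∧ W ω ≤ 1 := fun ω => by rcases hW01 ω with h | h <;> rw [h] <;> norm_num
  have hAb : ∀ ω, 0 ≤ A ω ∧ A ω ≤ 1 := fun ω => by rcases hA01 ω with h | h <;> rw [h] <;> norm_num
  have key : ∀ C : Set S, MeasurableSet C → ∀ M : ℝ, 0 ≤ M → (∀ x ∈ C, |l x| ≤ M) →
      ((∀ x ∈ C, 2 < l x) ∨ (∀ x ∈ C, l x < -2)) →
      ∀ᵐ ω ∂P, X ω ∉ C := by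
    intro C hC M hM0 hM hcase
    set g : S → ℝ := fun x => if x ∈ C then 1 else 0 with hgdef
    have hgm : Measurable g := Measurable.ite hC measurable_const measurable_const
    have hg1 : ∀ x ∈ C, g x = 1 := fun x h => if_pos h
    have hg0 : ∀ x, x ∉ C → g x = 0 := fun x h => if_neg h
    have hgb : ∀ x, 0 ≤ g x ∧ g x ≤ 1 := fun x => by by_cases h : x ∈ C <;> simp [hgdef, h]
    have hgabs : ∀ x, |g x| ≤ 1 := fun x => abs_le.mpr ⟨by linarith [(hgb x).1], (hgb x).2⟩
    have hWabs : ∀ ω, |W ω| ≤ 1 := fun ω => abs_le.mpr ⟨by linarith [(hWb ω).1], (hWb ω).2⟩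
    have hAabs : ∀ ω, |A ω| ≤ 1 := fun ω => abs_le.mpr ⟨by linarith [(hAb ω).1], (hAb ω).2⟩
    have hWg_int : Integrable (fun ω => W ω * g (X ω)) P := by
      have hb : ∀ ω, |W ω * g (X ω)| ≤ 1 * 1 := fun ω => abs_mul_le' (hWabs ω) (hgabs _)
      exact integ_of_bdd P (hW.mul (hgm.comp hX)) hb
    have hAWg_int : Integrable (fun ω => A ω * W ω * g (X ω)) P := by
      have hb : ∀ ω, |A ω * W ω * g (X ω)| ≤ 1 * 1 * 1 := fun ω =>
        abs_mul_le' (abs_mul_le' (hAabs ω) (hWabs ω)) (hgabs _)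
      exact integ_of_bdd P ((hA.mul hW).mul (hgm.comp hX)) hb
    have hlWg_int : Integrable (fun ω => l (X ω) * W ω * g (X ω)) P := by
      have hb : ∀ ω, |l (X ω) * W ω * g (X ω)| ≤ M := by
        intro ω
        by_cases h : X ω ∈ C
        · rw [hg1 _ h, mul_one, abs_mul]
          calc |l (X ω)| * |W ω| ≤ M * 1 :=
                mul_le_mul (hM _ h) (hWabs ω) (abs_nonneg _) hM0
            _ = M := mul_one M
        · rw [hg0 _ h, mul_zero, abs_zero]; exact hM0
      exact integ_of_bdd P (((hl.comp hX).mul hW).mul (hgm.comp hX)) hb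
    have h1 := hlv g hgm ⟨1, hgabs⟩
    have hWg_eq := hVw g hgm ⟨1, hgabs⟩
    have hAle : ∫ ω, A ω * W ω * g (X ω) ∂P ≤ ∫ ω, W ω * g (X ω) ∂P := by
      apply integral_mono hAWg_int hWg_int
      intro ω
      dsimp only
      nlinarith [mul_nonneg (hWb ω).1 (hgb (X ω)).1, (hAb ω).1, (hAb ω).2]
    have hAge : (0:ℝ) ≤ ∫ ω, A ω * W ω * g (X ω) ∂P := by
      apply integral_nonneg; intro ω
      exact mul_nonneg (mul_nonneg (hAb ω).1 (hWb ω).1) (hgb (X ω)).1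
    have hineq : ∫ ω, W ω * g (X ω) ∂P ≤ 0 := by
      rcases hcase with hup | hdn
      · have h2 : (2:ℝ) * ∫ ω, W ω * g (X ω) ∂P ≤ ∫ ω, l (X ω) * W ω * g (X ω) ∂P := by
          rw [← integral_const_mul]
          apply integral_mono (hWg_int.const_mul 2) hlWg_int
          intro ω
          dsimp only
          by_cases h : X ω ∈ C
          · rw [hg1 _ h]
            have := hup _ h
            nlinarith [(hWb ω).1, (hWb ω).2]
          · rw [hg0 _ h]; simp
        linarith [h1, hAle, h2]
      · have h2 : ∫ ω, l (X ω) * W ω * g (X ω) ∂P ≤ (-2) * ∫ ω, W ω * g (X ω) ∂P := by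
          rw [← integral_const_mul]
          apply integral_mono hlWg_int (hWg_int.const_mul (-2))
          intro ω
          dsimp only
          by_cases h : X ω ∈ C
          · rw [hg1 _ h]
            have := hdn _ h
            nlinarith [(hWb ω).1, (hWb ω).2]
          · rw [hg0 _ h]; simp
        linarith [h1, hAge, h2]
    have hwg_int : Integrable (fun ω => w (X ω) * g (X ω)) P := by
      have hb : ∀ ω, |w (X ω) * g (X ω)| ≤ 1 * 1 := fun ω => abs_mul_le' (hwhi _) (hgabs _)
      exact integ_of_bdd P ((hw.comp hX).mul (hgm.comp hX)) hb
    have hwg_nonneg : ∀ ω, 0 ≤ w (X ω) * g (X ω) := fun ω =>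
      mul_nonneg (le_of_lt (lt_of_lt_of_le hε (hwlo _))) (hgb _).1
    have hzero : ∫ ω, w (X ω) * g (X ω) ∂P = 0 :=
      le_antisymm (hWg_eq ▸ hineq) (integral_nonneg hwg_nonneg)
    have hae0 : (fun ω => w (X ω) * g (X ω)) =ᵐ[P] 0 :=
      (integral_eq_zero_iff_of_nonneg hwg_nonneg hwg_int).mp hzero
    filter_upwards [hae0] with ω hω hmem
    rw [hg1 _ hmem, mul_one] at hω
    have hpos : (0:ℝ) < w (X ω) := lt_of_lt_of_le hε (hwlo _)
    simp only [Pi.zero_apply] at hω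
    linarith
  have hall : ∀ᵐ ω ∂P, ∀ n : ℕ,
      X ω ∉ {x : S | 2 < l x ∧ l x ≤ n} ∧ X ω ∉ {x : S | l x < -2 ∧ -(n:ℝ) ≤ l x} := by
    rw [MeasureTheory.ae_all_iff]
    intro n
    have hp := key {x : S | 2 < l x ∧ l x ≤ n}
      ((measurableSet_lt measurable_const hl).inter (measurableSet_le hl measurable_const))
      n (Nat.cast_nonneg n)
      (fun x hx => abs_le.mpr ⟨by linarith [hx.1], hx.2⟩)
      (Or.inl (fun x hx => hx.1))
    have hm := key {x : S | l x < -2 ∧ -(n:ℝ) ≤ l x}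
      ((measurableSet_lt hl measurable_const).inter (measurableSet_le measurable_const hl))
      n (Nat.cast_nonneg n)
      (fun x hx => abs_le.mpr ⟨hx.2, by linarith [hx.1]⟩)
      (Or.inr (fun x hx => hx.1))
    filter_upwards [hp, hm] with ω h1 h2
    exact ⟨h1, h2⟩
  filter_upwards [hall] with ω hω
  by_contra hcon
  push_neg at hcon
  rcases lt_abs.mp hcon with hpos | hneg
  · exact (hω ⌈l (X ω)⌉₊).1 ⟨hpos, Nat.le_ceil _⟩
  · have hn : -l (X ω) ≤ (⌈-l (X ω)⌉₊ : ℝ) := Nat.le_ceil _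
    exact (hω ⌈-l (X ω)⌉₊).2 ⟨by linarith, by linarith⟩

open MeasureTheory ProbabilityTheory

/-- double robustness of the uncentered influence function for Δ0:
(i) for every bounded measurable λ* : S × {0,1} → ℝ (encoded by its sections λ0*, λ1*),
E[(2Z−1)/π0(X,Z)·(A − λ*(X,Z)) + λ*(X,1) − λ*(X,0)] = Δ0; and
(ii) for every measurable π* ≥ ε′ > 0,
E[(2Z−1)/π*(X,Z)·(A − ℓ_Z(X)) + ℓ1(X) − ℓ0(X)] = Δ0. -/
theorem stmt_10
    {Ω : Type*} [MeasurableSpace Ω] (P : Measure Ω) [IsProbabilityMeasure P]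
    {S : Type*} [mS : MeasurableSpace S]
    (X : Ω → S) (hX : Measurable X)
    (Z A : Ω → ℝ) (hZ : Measurable Z) (hA : Measurable A)
    (hZ01 : ∀ ω, Z ω = 0 ∨ Z ω = 1)
    (hA01 : ∀ ω, A ω = 0 ∨ A ω = 1)
    (e : S → ℝ) (he : Measurable e) (ε : ℝ) (hε : 0 < ε) (hε2 : ε < 1/2)
    (hebd : ∀ x, ε ≤ e x ∧ e x ≤ 1 - ε)
    (hVe : ∀ g : S → ℝ, Measurable g → (∃ C, ∀ x, |g x| ≤ C) →
      ∫ ω, Z ω * g (X ω) ∂P = ∫ ω, e (X ω) * g (X ω) ∂P)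
    (l0 l1 : S → ℝ) (hl0 : Measurable l0) (hl1 : Measurable l1)
    (hl0v : ∀ g : S → ℝ, Measurable g → (∃ C, ∀ x, |g x| ≤ C) →
      ∫ ω, A ω * (if Z ω = 0 then (1:ℝ) else 0) * g (X ω) ∂P
        = ∫ ω, l0 (X ω) * (if Z ω = 0 then (1:ℝ) else 0) * g (X ω) ∂P)
    (hl1v : ∀ g : S → ℝ, Measurable g → (∃ C, ∀ x, |g x| ≤ C) →
      ∫ ω, A ω * (if Z ω = 1 then (1:ℝ) else 0) * g (X ω) ∂P
        = ∫ ω, l1 (X ω) * (if Z ω = 1 then (1:ℝ) else 0) * g (X ω) ∂P) :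
    (∀ lam0s lam1s : S → ℝ, Measurable lam0s → Measurable lam1s →
      (∃ C, ∀ x, |lam0s x| ≤ C) → (∃ C, ∀ x, |lam1s x| ≤ C) →
      ∫ ω, (2 * Z ω - 1) / (Z ω * e (X ω) + (1 - Z ω) * (1 - e (X ω)))
            * (A ω - (if Z ω = 1 then lam1s (X ω) else lam0s (X ω)))
          + (lam1s (X ω) - lam0s (X ω)) ∂P
        = ∫ ω, l1 (X ω) - l0 (X ω) ∂P)
    ∧ (∀ (π0s π1s : S → ℝ) (ε' : ℝ), Measurable π0s → Measurable π1s → 0 < ε' →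
      (∀ x, ε' ≤ π0s x) → (∀ x, ε' ≤ π1s x) →
      ∫ ω, (2 * Z ω - 1) / (if Z ω = 1 then π1s (X ω) else π0s (X ω))
            * (A ω - (if Z ω = 1 then l1 (X ω) else l0 (X ω)))
          + (l1 (X ω) - l0 (X ω)) ∂P
        = ∫ ω, l1 (X ω) - l0 (X ω) ∂P) := by
  have hZb : ∀ ω, |Z ω| ≤ 1 := fun ω => by rcases hZ01 ω with h | h <;> rw [h] <;> norm_num
  have hZ1b : ∀ ω, |1 - Z ω| ≤ 1 := fun ω => by rcases hZ01 ω with h | h <;> rw [h] <;> norm_num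
  have hAb : ∀ ω, |A ω| ≤ 1 := fun ω => by rcases hA01 ω with h | h <;> rw [h] <;> norm_num
  have heb1 : ∀ x, |e x| ≤ 1 := fun x => by
    have h := hebd x; rw [abs_le]; constructor <;> [linarith; linarith]
  have he1b : ∀ x, |1 - e x| ≤ 1 := fun x => by
    have h := hebd x; rw [abs_le]; constructor <;> [linarith; linarith]
  have he1lo : ∀ x, ε ≤ 1 - e x := fun x => by have h := hebd x; linarith [h.2]
  have hene : ∀ x, e x ≠ 0 := fun x => ne_of_gt (lt_of_lt_of_le hε (hebd x).1)
  have he1ne : ∀ x, 1 - e x ≠ 0 := fun x => ne_of_gt (lt_of_lt_of_le hε (he1lo x))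
  -- derived: ∫ (1-Z) g(X) = ∫ (1-e)(X) g(X)
  have hVe' : ∀ g : S → ℝ, Measurable g → (∃ C, ∀ x, |g x| ≤ C) →
      ∫ ω, (1 - Z ω) * g (X ω) ∂P = ∫ ω, (1 - e (X ω)) * g (X ω) ∂P := by
    rintro g hg ⟨C, hC⟩
    have hgX : Integrable (fun ω => g (X ω)) P := integ_of_bdd P (hg.comp hX) (fun ω => hC _)
    have hZg : Integrable (fun ω => Z ω * g (X ω)) P :=
      integ_of_bdd P (hZ.mul (hg.comp hX)) (fun ω => abs_mul_le' (hZb ω) (hC _))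
    have heg : Integrable (fun ω => e (X ω) * g (X ω)) P :=
      integ_of_bdd P ((he.comp hX).mul (hg.comp hX)) (fun ω => abs_mul_le' (heb1 _) (hC _))
    have e1 : (fun ω => (1 - Z ω) * g (X ω)) = fun ω => g (X ω) - Z ω * g (X ω) :=
      funext fun ω => by ring
    have e2 : (fun ω => (1 - e (X ω)) * g (X ω)) = fun ω => g (X ω) - e (X ω) * g (X ω) :=
      funext fun ω => by ring
    rw [e1, e2, integral_sub hgX hZg, integral_sub hgX heg, hVe g hg ⟨C, hC⟩]
  -- indicator functions
  have hs1 : MeasurableSet {ω | Z ω = 1} := hZ (measurableSet_singleton 1)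
  have hs0 : MeasurableSet {ω | Z ω = 0} := hZ (measurableSet_singleton 0)
  have hW1m : Measurable (fun ω => if Z ω = 1 then (1:ℝ) else 0) :=
    Measurable.ite hs1 measurable_const measurable_const
  have hW0m : Measurable (fun ω => if Z ω = 0 then (1:ℝ) else 0) :=
    Measurable.ite hs0 measurable_const measurable_const
  have hW101 : ∀ ω, (if Z ω = 1 then (1:ℝ) else 0) = 0 ∨ (if Z ω = 1 then (1:ℝ) else 0) = 1 :=
    fun ω => by by_cases h : Z ω = 1 <;> simp [h]
  have hW001 : ∀ ω, (if Z ω = 0 then (1:ℝ) else 0) = 0 ∨ (if Z ω = 0 then (1:ℝ) else 0) = 1 :=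
    fun ω => by by_cases h : Z ω = 0 <;> simp [h]
  have hchi1 : ∀ ω, (if Z ω = 1 then (1:ℝ) else 0) = Z ω := fun ω => by
    rcases hZ01 ω with h | h <;> rw [h] <;> norm_num
  have hchi0 : ∀ ω, (if Z ω = 0 then (1:ℝ) else 0) = 1 - Z ω := fun ω => by
    rcases hZ01 ω with h | h <;> rw [h] <;> norm_num
  -- a.e. boundedness of l1, l0
  have hb1 : ∀ᵐ ω ∂P, |l1 (X ω)| ≤ 2 := by
    apply ae_bdd P X hX (fun ω => if Z ω = 1 then (1:ℝ) else 0) hW1m hW101 A hA hA01 e he ε hε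
      (fun x => (hebd x).1) heb1 _ l1 hl1 hl1v
    rintro g hg ⟨C, hC⟩
    have e1 : (fun ω => (if Z ω = 1 then (1:ℝ) else 0) * g (X ω)) = fun ω => Z ω * g (X ω) :=
      funext fun ω => by rw [hchi1 ω]
    rw [e1, hVe g hg ⟨C, hC⟩]
  have hb0 : ∀ᵐ ω ∂P, |l0 (X ω)| ≤ 2 := by
    apply ae_bdd P X hX (fun ω => if Z ω = 0 then (1:ℝ) else 0) hW0m hW001 A hA hA01
      (fun x => 1 - e x) (measurable_const.sub he) ε hε he1lo he1b _ l0 hl0 hl0v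
    rintro g hg ⟨C, hC⟩
    have e1 : (fun ω => (if Z ω = 0 then (1:ℝ) else 0) * g (X ω)) = fun ω => (1 - Z ω) * g (X ω) :=
      funext fun ω => by rw [hchi0 ω]
    rw [e1, hVe' g hg ⟨C, hC⟩]
  -- truncations
  set l1' : S → ℝ := fun x => max (-2) (min 2 (l1 x)) with hl1'def
  set l0' : S → ℝ := fun x => max (-2) (min 2 (l0 x)) with hl0'def
  have hl1'm : Measurable l1' := measurable_const.max (measurable_const.min hl1)
  have hl0'm : Measurable l0' := measurable_const.max (measurable_const.min hl0)
  have htrunc : ∀ t : ℝ, |t| ≤ 2 → max (-2) (min 2 t) = t := fun t ht => by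
    rcases abs_le.mp ht with ⟨h1, h2⟩
    rw [min_eq_right h2, max_eq_right h1]
  have hl1'b : ∀ x, |l1' x| ≤ 2 := fun x => abs_le.mpr
    ⟨le_max_left _ _, max_le (by norm_num) (min_le_left _ _)⟩
  have hl0'b : ∀ x, |l0' x| ≤ 2 := fun x => abs_le.mpr
    ⟨le_max_left _ _, max_le (by norm_num) (min_le_left _ _)⟩
  have ae1 : ∀ᵐ ω ∂P, l1' (X ω) = l1 (X ω) := hb1.mono fun ω h => htrunc _ h
  have ae0 : ∀ᵐ ω ∂P, l0' (X ω) = l0 (X ω) := hb0.mono fun ω h => htrunc _ h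
  -- primed version hypotheses
  have hl1v' : ∀ g : S → ℝ, Measurable g → (∃ C, ∀ x, |g x| ≤ C) →
      ∫ ω, A ω * (if Z ω = 1 then (1:ℝ) else 0) * g (X ω) ∂P
        = ∫ ω, l1' (X ω) * (if Z ω = 1 then (1:ℝ) else 0) * g (X ω) ∂P := by
    intro g hg hgb
    rw [hl1v g hg hgb]
    apply integral_congr_ae
    filter_upwards [ae1] with ω h
    rw [h]
  have hl0v' : ∀ g : S → ℝ, Measurable g → (∃ C, ∀ x, |g x| ≤ C) →
      ∫ ω, A ω * (if Z ω = 0 then (1:ℝ) else 0) * g (X ω) ∂P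
        = ∫ ω, l0' (X ω) * (if Z ω = 0 then (1:ℝ) else 0) * g (X ω) ∂P := by
    intro g hg hgb
    rw [hl0v g hg hgb]
    apply integral_congr_ae
    filter_upwards [ae0] with ω h
    rw [h]
  -- RHS transfer
  have hRHS : ∫ ω, l1 (X ω) - l0 (X ω) ∂P = ∫ ω, l1' (X ω) - l0' (X ω) ∂P := by
    apply integral_congr_ae
    filter_upwards [ae1, ae0] with ω h1 h0
    rw [h1, h0]
  have hl1'X_int : Integrable (fun ω => l1' (X ω)) P :=
    integ_of_bdd P (hl1'm.comp hX) (fun ω => hl1'b _)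
  have hl0'X_int : Integrable (fun ω => l0' (X ω)) P :=
    integ_of_bdd P (hl0'm.comp hX) (fun ω => hl0'b _)
  -- key transfer lemmas
  have hKe : ∀ b : S → ℝ, Measurable b → ∀ Cb : ℝ, (∀ x, |b x| ≤ Cb) →
      ∫ ω, Z ω * (b (X ω) * (e (X ω))⁻¹) ∂P = ∫ ω, b (X ω) ∂P := by
    intro b hb Cb hCb
    have hg : Measurable fun x => b x * (e x)⁻¹ := hb.mul he.inv
    have hgb : ∀ x, |b x * (e x)⁻¹| ≤ Cb * ε⁻¹ := fun x =>
      abs_mul_le' (hCb x) (inv_bnd hε (hebd x).1)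
    rw [hVe _ hg ⟨_, hgb⟩]
    apply integral_congr_ae
    apply Filter.Eventually.of_forall
    intro ω
    have h0 : e (X ω) ≠ 0 := hene _
    field_simp
  have hK1e : ∀ b : S → ℝ, Measurable b → ∀ Cb : ℝ, (∀ x, |b x| ≤ Cb) →
      ∫ ω, (1 - Z ω) * (b (X ω) * (1 - e (X ω))⁻¹) ∂P = ∫ ω, b (X ω) ∂P := by
    intro b hb Cb hCb
    have hg : Measurable fun x => b x * (1 - e x)⁻¹ := hb.mul (measurable_const.sub he).inv
    have hgb : ∀ x, |b x * (1 - e x)⁻¹| ≤ Cb * ε⁻¹ := fun x =>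
      abs_mul_le' (hCb x) (inv_bnd hε (he1lo x))
    rw [hVe' _ hg ⟨_, hgb⟩]
    apply integral_congr_ae
    apply Filter.Eventually.of_forall
    intro ω
    have h0 : 1 - e (X ω) ≠ 0 := he1ne _
    field_simp
  constructor
  · -- Part (i)
    rintro lam0s lam1s hm0 hm1 ⟨C0, hC0⟩ ⟨C1, hC1⟩
    have hpt : (fun ω => (2 * Z ω - 1) / (Z ω * e (X ω) + (1 - Z ω) * (1 - e (X ω)))
          * (A ω - (if Z ω = 1 then lam1s (X ω) else lam0s (X ω)))
          + (lam1s (X ω) - lam0s (X ω)))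
        = fun ω => (A ω * (Z ω * (e (X ω))⁻¹) - lam1s (X ω) * (Z ω * (e (X ω))⁻¹))
            - (A ω * ((1 - Z ω) * (1 - e (X ω))⁻¹)
                - lam0s (X ω) * ((1 - Z ω) * (1 - e (X ω))⁻¹))
            + (lam1s (X ω) - lam0s (X ω)) := by
      funext ω
      have h0 : e (X ω) ≠ 0 := hene _
      have h1 : 1 - e (X ω) ≠ 0 := he1ne _
      rcases hZ01 ω with h | h <;> rw [h] <;> norm_num <;> field_simp <;> ring
    have hi1 : Integrable (fun ω => A ω * (Z ω * (e (X ω))⁻¹)) P :=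
      integ_of_bdd P (hA.mul (hZ.mul (he.comp hX).inv))
        (fun ω => abs_mul_le' (hAb ω) (abs_mul_le' (hZb ω) (inv_bnd hε (hebd _).1)))
    have hi2 : Integrable (fun ω => lam1s (X ω) * (Z ω * (e (X ω))⁻¹)) P :=
      integ_of_bdd P ((hm1.comp hX).mul (hZ.mul (he.comp hX).inv))
        (fun ω => abs_mul_le' (hC1 _) (abs_mul_le' (hZb ω) (inv_bnd hε (hebd _).1)))
    have hi3 : Integrable (fun ω => A ω * ((1 - Z ω) * (1 - e (X ω))⁻¹)) P :=
      integ_of_bdd P (hA.mul ((measurable_const.sub hZ).mul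
          ((measurable_const.sub (he.comp hX)).inv)))
        (fun ω => abs_mul_le' (hAb ω) (abs_mul_le' (hZ1b ω) (inv_bnd hε (he1lo _))))
    have hi4 : Integrable (fun ω => lam0s (X ω) * ((1 - Z ω) * (1 - e (X ω))⁻¹)) P :=
      integ_of_bdd P ((hm0.comp hX).mul ((measurable_const.sub hZ).mul
          ((measurable_const.sub (he.comp hX)).inv)))
        (fun ω => abs_mul_le' (hC0 _) (abs_mul_le' (hZ1b ω) (inv_bnd hε (he1lo _))))
    have hil1 : Integrable (fun ω => lam1s (X ω)) P :=
      integ_of_bdd P (hm1.comp hX) (fun ω => hC1 _)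
    have hil0 : Integrable (fun ω => lam0s (X ω)) P :=
      integ_of_bdd P (hm0.comp hX) (fun ω => hC0 _)
    have hv1 : ∫ ω, A ω * (Z ω * (e (X ω))⁻¹) ∂P = ∫ ω, l1' (X ω) ∂P := by
      have e1 : (fun ω => A ω * (Z ω * (e (X ω))⁻¹))
          = fun ω => A ω * (if Z ω = 1 then (1:ℝ) else 0) * (e (X ω))⁻¹ :=
        funext fun ω => by rw [hchi1 ω]; ring
      rw [e1, hl1v' (fun x => (e x)⁻¹) he.inv ⟨ε⁻¹, fun x => inv_bnd hε (hebd x).1⟩]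
      have e2 : (fun ω => l1' (X ω) * (if Z ω = 1 then (1:ℝ) else 0) * (e (X ω))⁻¹)
          = fun ω => Z ω * (l1' (X ω) * (e (X ω))⁻¹) :=
        funext fun ω => by rw [hchi1 ω]; ring
      rw [e2, hKe l1' hl1'm 2 hl1'b]
    have hv2 : ∫ ω, lam1s (X ω) * (Z ω * (e (X ω))⁻¹) ∂P = ∫ ω, lam1s (X ω) ∂P := by
      have e2 : (fun ω => lam1s (X ω) * (Z ω * (e (X ω))⁻¹))
          = fun ω => Z ω * (lam1s (X ω) * (e (X ω))⁻¹) := funext fun ω => by ring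
      rw [e2, hKe lam1s hm1 C1 hC1]
    have hv3 : ∫ ω, A ω * ((1 - Z ω) * (1 - e (X ω))⁻¹) ∂P = ∫ ω, l0' (X ω) ∂P := by
      have e1 : (fun ω => A ω * ((1 - Z ω) * (1 - e (X ω))⁻¹))
          = fun ω => A ω * (if Z ω = 0 then (1:ℝ) else 0) * (1 - e (X ω))⁻¹ :=
        funext fun ω => by rw [hchi0 ω]; ring
      rw [e1, hl0v' (fun x => (1 - e x)⁻¹) (measurable_const.sub he).inv ⟨ε⁻¹, fun x => inv_bnd hε (he1lo x)⟩]
      have e2 : (fun ω => l0' (X ω) * (if Z ω = 0 then (1:ℝ) else 0) * (1 - e (X ω))⁻¹)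
          = fun ω => (1 - Z ω) * (l0' (X ω) * (1 - e (X ω))⁻¹) :=
        funext fun ω => by rw [hchi0 ω]; ring
      rw [e2, hK1e l0' hl0'm 2 hl0'b]
    have hv4 : ∫ ω, lam0s (X ω) * ((1 - Z ω) * (1 - e (X ω))⁻¹) ∂P
        = ∫ ω, lam0s (X ω) ∂P := by
      have e2 : (fun ω => lam0s (X ω) * ((1 - Z ω) * (1 - e (X ω))⁻¹))
          = fun ω => (1 - Z ω) * (lam0s (X ω) * (1 - e (X ω))⁻¹) := funext fun ω => by ring
      rw [e2, hK1e lam0s hm0 C0 hC0]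
    have hi12 : Integrable (fun ω => A ω * (Z ω * (e (X ω))⁻¹)
        - lam1s (X ω) * (Z ω * (e (X ω))⁻¹)) P := hi1.sub hi2
    have hi34 : Integrable (fun ω => A ω * ((1 - Z ω) * (1 - e (X ω))⁻¹)
        - lam0s (X ω) * ((1 - Z ω) * (1 - e (X ω))⁻¹)) P := hi3.sub hi4
    have hi1234 : Integrable (fun ω => (A ω * (Z ω * (e (X ω))⁻¹)
        - lam1s (X ω) * (Z ω * (e (X ω))⁻¹))
        - (A ω * ((1 - Z ω) * (1 - e (X ω))⁻¹)
        - lam0s (X ω) * ((1 - Z ω) * (1 - e (X ω))⁻¹))) P := hi12.sub hi34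
    have hi5 : Integrable (fun ω => lam1s (X ω) - lam0s (X ω)) P := hil1.sub hil0
    rw [hpt, integral_add hi1234 hi5, integral_sub hi12 hi34, integral_sub hi1 hi2,
      integral_sub hi3 hi4, integral_sub hil1 hil0, hv1, hv2, hv3, hv4, hRHS,
      integral_sub hl1'X_int hl0'X_int]
    ring
  · -- Part (ii)
    intro π0s π1s ε' hmp0 hmp1 hε' hp0 hp1
    have hp1ne : ∀ x, π1s x ≠ 0 := fun x => ne_of_gt (lt_of_lt_of_le hε' (hp1 x))
    have hp0ne : ∀ x, π0s x ≠ 0 := fun x => ne_of_gt (lt_of_lt_of_le hε' (hp0 x))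
    have hcg : (fun ω => (2 * Z ω - 1) / (if Z ω = 1 then π1s (X ω) else π0s (X ω))
          * (A ω - (if Z ω = 1 then l1 (X ω) else l0 (X ω))) + (l1 (X ω) - l0 (X ω)))
        =ᵐ[P] fun ω => (A ω * (Z ω * (π1s (X ω))⁻¹) - l1' (X ω) * (Z ω * (π1s (X ω))⁻¹))
            - (A ω * ((1 - Z ω) * (π0s (X ω))⁻¹) - l0' (X ω) * ((1 - Z ω) * (π0s (X ω))⁻¹))
            + (l1' (X ω) - l0' (X ω)) := by
      filter_upwards [ae1, ae0] with ω h1 h0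
      rw [← h1, ← h0]
      have hq1 : π1s (X ω) ≠ 0 := hp1ne _
      have hq0 : π0s (X ω) ≠ 0 := hp0ne _
      rcases hZ01 ω with h | h <;> rw [h] <;> norm_num <;> field_simp <;> ring
    have hj1 : Integrable (fun ω => A ω * (Z ω * (π1s (X ω))⁻¹)) P :=
      integ_of_bdd P (hA.mul (hZ.mul (hmp1.comp hX).inv))
        (fun ω => abs_mul_le' (hAb ω) (abs_mul_le' (hZb ω) (inv_bnd hε' (hp1 _))))
    have hj2 : Integrable (fun ω => l1' (X ω) * (Z ω * (π1s (X ω))⁻¹)) P :=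
      integ_of_bdd P ((hl1'm.comp hX).mul (hZ.mul (hmp1.comp hX).inv))
        (fun ω => abs_mul_le' (hl1'b _) (abs_mul_le' (hZb ω) (inv_bnd hε' (hp1 _))))
    have hj3 : Integrable (fun ω => A ω * ((1 - Z ω) * (π0s (X ω))⁻¹)) P :=
      integ_of_bdd P (hA.mul ((measurable_const.sub hZ).mul (hmp0.comp hX).inv))
        (fun ω => abs_mul_le' (hAb ω) (abs_mul_le' (hZ1b ω) (inv_bnd hε' (hp0 _))))
    have hj4 : Integrable (fun ω => l0' (X ω) * ((1 - Z ω) * (π0s (X ω))⁻¹)) P :=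
      integ_of_bdd P ((hl0'm.comp hX).mul ((measurable_const.sub hZ).mul (hmp0.comp hX).inv))
        (fun ω => abs_mul_le' (hl0'b _) (abs_mul_le' (hZ1b ω) (inv_bnd hε' (hp0 _))))
    have hc1 : ∫ ω, A ω * (Z ω * (π1s (X ω))⁻¹) ∂P
        = ∫ ω, l1' (X ω) * (Z ω * (π1s (X ω))⁻¹) ∂P := by
      have e1 : (fun ω => A ω * (Z ω * (π1s (X ω))⁻¹))
          = fun ω => A ω * (if Z ω = 1 then (1:ℝ) else 0) * (π1s (X ω))⁻¹ :=
        funext fun ω => by rw [hchi1 ω]; ring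
      have e2 : (fun ω => l1' (X ω) * (if Z ω = 1 then (1:ℝ) else 0) * (π1s (X ω))⁻¹)
          = fun ω => l1' (X ω) * (Z ω * (π1s (X ω))⁻¹) :=
        funext fun ω => by rw [hchi1 ω]; ring
      rw [e1, hl1v' (fun x => (π1s x)⁻¹) (hmp1.inv) ⟨ε'⁻¹, fun x => inv_bnd hε' (hp1 x)⟩, e2]
    have hc0 : ∫ ω, A ω * ((1 - Z ω) * (π0s (X ω))⁻¹) ∂P
        = ∫ ω, l0' (X ω) * ((1 - Z ω) * (π0s (X ω))⁻¹) ∂P := by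
      have e1 : (fun ω => A ω * ((1 - Z ω) * (π0s (X ω))⁻¹))
          = fun ω => A ω * (if Z ω = 0 then (1:ℝ) else 0) * (π0s (X ω))⁻¹ :=
        funext fun ω => by rw [hchi0 ω]; ring
      have e2 : (fun ω => l0' (X ω) * (if Z ω = 0 then (1:ℝ) else 0) * (π0s (X ω))⁻¹)
          = fun ω => l0' (X ω) * ((1 - Z ω) * (π0s (X ω))⁻¹) :=
        funext fun ω => by rw [hchi0 ω]; ring
      rw [e1, hl0v' (fun x => (π0s x)⁻¹) (hmp0.inv) ⟨ε'⁻¹, fun x => inv_bnd hε' (hp0 x)⟩, e2]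
    have hj12 : Integrable (fun ω => A ω * (Z ω * (π1s (X ω))⁻¹)
        - l1' (X ω) * (Z ω * (π1s (X ω))⁻¹)) P := hj1.sub hj2
    have hj34 : Integrable (fun ω => A ω * ((1 - Z ω) * (π0s (X ω))⁻¹)
        - l0' (X ω) * ((1 - Z ω) * (π0s (X ω))⁻¹)) P := hj3.sub hj4
    have hj1234 : Integrable (fun ω => (A ω * (Z ω * (π1s (X ω))⁻¹)
        - l1' (X ω) * (Z ω * (π1s (X ω))⁻¹))
        - (A ω * ((1 - Z ω) * (π0s (X ω))⁻¹)
        - l0' (X ω) * ((1 - Z ω) * (π0s (X ω))⁻¹))) P := hj12.sub hj34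
    have hj5 : Integrable (fun ω => l1' (X ω) - l0' (X ω)) P := hl1'X_int.sub hl0'X_int
    rw [integral_congr_ae hcg, integral_add hj1234 hj5, integral_sub hj12 hj34,
      integral_sub hj1 hj2, integral_sub hj3 hj4, hc1, hc0, hRHS,
      integral_sub hl1'X_int hl0'X_int]
    ring
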